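/- There exist z0 > 1 and a constant C1 > 0 such that E_y[ z0^τ · 1_{τ < ∞} ] < C1 for every y ∈ ℤ × ℤ≥0 with y(1) ≥ y(2). -/

import Mathlib

open MeasureTheory ProbabilityTheory Filter

noncomputable section

/-- One step of the walk constrained to the nonnegative quadrant:
`π(x,v) = v` if `x + v ∈ ℤ≥0²`, and `0` otherwise. -/
def stepX (p v : ℤ × ℤ) : ℤ × ℤ :=
  if 0 ≤ (p + v).1 ∧ 0 ≤ (p + v).2 then p + v else p

/-- One step of the walk constrained only on the second coordinate:
`π₁(y,v) = v` if `y + v ∈ ℤ × ℤ≥0`, and `0` otherwise. -/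
def stepY (p v : ℤ × ℤ) : ℤ × ℤ := if 0 ≤ (p + v).2 then p + v else p

/-- Path of the constrained walk `X` driven by the increments `inc`:
`X_0 = x`, `X_{k+1} = X_k + π(X_k, inc_{k+1})`. -/
def pathX (x : ℤ × ℤ) (inc : ℕ → ℤ × ℤ) : ℕ → ℤ × ℤ
  | 0 => x
  | k + 1 => stepX (pathX x inc k) (inc (k + 1))

/-- Path of the walk `Y`, constrained only on the second coordinate, and with
the first coordinate of each increment reversed:
`Y_0 = y`, `Y_{k+1} = Y_k + π₁(Y_k, 𝕀·inc_{k+1})` where `𝕀(v1,v2) = (−v1,v2)`. -/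
def pathY (y : ℤ × ℤ) (inc : ℕ → ℤ × ℤ) : ℕ → ℤ × ℤ
  | 0 => y
  | k + 1 => stepY (pathY y inc k) (-(inc (k + 1)).1, (inc (k + 1)).2)

/-- Hitting time of the set `A` by the path `p`, as an extended natural
number (`⊤` if the set is never hit). -/
def hitTime (A : Set (ℤ × ℤ)) (p : ℕ → ℤ × ℤ) : ℕ∞ :=
  sInf ((fun n : ℕ => (n : ℕ∞)) '' {n : ℕ | p n ∈ A})

/-- `τ_n`: first time the constrained walk `X` started at `x` hits
`{x : x(1) + x(2) = n}`. -/
def tauN (n : ℤ) (x : ℤ × ℤ) (inc : ℕ → ℤ × ℤ) : ℕ∞ :=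
  hitTime {p | p.1 + p.2 = n} (pathX x inc)

/-- `τ_0`: first time the constrained walk `X` started at `x` hits the origin. -/
def tau0 (x : ℤ × ℤ) (inc : ℕ → ℤ × ℤ) : ℕ∞ :=
  hitTime {((0 : ℤ), (0 : ℤ))} (pathX x inc)

/-- `τ`: first time the walk `Y` started at `y` hits `{y : y(1) = y(2)}`. -/
def tauY (y : ℤ × ℤ) (inc : ℕ → ℤ × ℤ) : ℕ∞ :=
  hitTime {p | p.1 = p.2} (pathY y inc)

/-- `I` is an i.i.d. sequence of `ℤ²`-valued random variables with
`P(I_k = (1,0)) = λ1`, `P(I_k = (−1,0)) = μ1`, `P(I_k = (0,1)) = λ2`,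
`P(I_k = (0,−1)) = μ2`. -/
def IncrementsLaw (l1 m1 l2 m2 : ℝ) {Ω : Type} [MeasurableSpace Ω]
    (μ : Measure Ω) (I : ℕ → Ω → ℤ × ℤ) : Prop :=
  (∀ k, Measurable (I k)) ∧
    iIndepFun I μ ∧
    ∀ k, μ (I k ⁻¹' {(1, 0)}) = ENNReal.ofReal l1 ∧
      μ (I k ⁻¹' {(-1, 0)}) = ENNReal.ofReal m1 ∧
      μ (I k ⁻¹' {(0, 1)}) = ENNReal.ofReal l2 ∧
      μ (I k ⁻¹' {(0, -1)}) = ENNReal.ofReal m2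
namespace Stmt6Aux

open Set

/-- negated-first-coordinate map -/
def ng (v : ℤ × ℤ) : ℤ × ℤ := (-v.1, v.2)

lemma pathY_succ_eq (y : ℤ × ℤ) (inc : ℕ → ℤ × ℤ) (k : ℕ) :
    pathY y inc (k + 1) = pathY (stepY y (ng (inc 1))) (fun j => inc (j + 1)) k := by
  induction k with
  | zero => rfl
  | succ k ih =>
      show stepY (pathY y inc (k + 1)) _ = stepY (pathY (stepY y (ng (inc 1))) (fun j => inc (j+1)) k) _
      rw [ih]

lemma pathY_congr (y : ℤ × ℤ) (inc1 inc2 : ℕ → ℤ × ℤ) (n : ℕ)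
    (h : ∀ k, 1 ≤ k → k ≤ n → inc1 k = inc2 k) :
    pathY y inc1 n = pathY y inc2 n := by
  induction n with
  | zero => rfl
  | succ n ih =>
      show stepY (pathY y inc1 n) _ = stepY (pathY y inc2 n) _
      rw [ih (fun k h1 h2 => h k h1 (by omega)), h (n+1) (by omega) le_rfl]

lemma hitTime_eq_find (A : Set (ℤ × ℤ)) (p : ℕ → ℤ × ℤ) [DecidablePred (fun n => p n ∈ A)] (h : ∃ n, p n ∈ A) :
    hitTime A p = ((Nat.find h : ℕ) : ℕ∞) := by
  refine le_antisymm (sInf_le ⟨Nat.find h, Nat.find_spec h, rfl⟩) (le_sInf ?_)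
  rintro x ⟨n, hn, rfl⟩
  simp only [Nat.cast_le]
  exact Nat.find_min' h hn

lemma hitTime_eq_top (A : Set (ℤ × ℤ)) (p : ℕ → ℤ × ℤ) (h : ¬ ∃ n, p n ∈ A) :
    hitTime A p = ⊤ := by
  have : {n : ℕ | p n ∈ A} = ∅ := by
    ext n; simp only [Set.mem_setOf_eq, Set.mem_empty_iff_false, iff_false]
    exact fun hn => h ⟨n, hn⟩
  simp [hitTime, this]

lemma tauY_eq_zero (y : ℤ × ℤ) (inc : ℕ → ℤ × ℤ) (hy : y.1 = y.2) :
    tauY y inc = 0 := by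
  have h : ∃ n, pathY y inc n ∈ {p : ℤ × ℤ | p.1 = p.2} := ⟨0, hy⟩
  rw [tauY, hitTime_eq_find _ _ h]
  have h0 : Nat.find h = 0 := Nat.find_eq_zero h |>.mpr hy
  exact_mod_cast congrArg (Nat.cast : ℕ → ℕ∞) h0

lemma tauY_rec (y : ℤ × ℤ) (inc : ℕ → ℤ × ℤ) (hy : y.1 ≠ y.2) :
    tauY y inc = tauY (stepY y (ng (inc 1))) (fun j => inc (j + 1)) + 1 := by
  by_cases h : ∃ n, pathY y inc n ∈ {p : ℤ × ℤ | p.1 = p.2}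
  · have h0 : ¬ (pathY y inc 0 ∈ {p : ℤ × ℤ | p.1 = p.2}) := hy
    have h' : ∃ k, pathY (stepY y (ng (inc 1))) (fun j => inc (j + 1)) k ∈ {p : ℤ × ℤ | p.1 = p.2} := by
      obtain ⟨n, hn⟩ := h
      cases n with
      | zero => exact absurd hn h0
      | succ k => exact ⟨k, by rw [← pathY_succ_eq]; exact hn⟩
    rw [tauY, hitTime_eq_find _ _ h, tauY, hitTime_eq_find _ _ h']
    have hfind : Nat.find h = Nat.find h' + 1 := by
      have hspec : pathY y inc (Nat.find h' + 1) ∈ {p : ℤ × ℤ | p.1 = p.2} := by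
        rw [pathY_succ_eq]; exact Nat.find_spec h'
      refine le_antisymm (Nat.find_min' h hspec) ?_
      have hne : Nat.find h ≠ 0 := fun h0' => h0 (h0' ▸ Nat.find_spec h)
      obtain ⟨k, hk⟩ := Nat.exists_eq_succ_of_ne_zero hne
      have hmem : pathY y inc (k + 1) ∈ {p : ℤ × ℤ | p.1 = p.2} := by
        have := Nat.find_spec h
        rwa [hk] at this
      have := Nat.find_min' h' (by rw [← pathY_succ_eq]; exact hmem)
      omega
    have := congrArg (Nat.cast : ℕ → ℕ∞) hfind
    push_cast at this
    exact_mod_cast this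
  · have h' : ¬ ∃ k, pathY (stepY y (ng (inc 1))) (fun j => inc (j + 1)) k ∈ {p : ℤ × ℤ | p.1 = p.2} := by
      rintro ⟨k, hk⟩
      exact h ⟨k + 1, by rw [pathY_succ_eq]; exact hk⟩
    rw [tauY, hitTime_eq_top _ _ h, tauY, hitTime_eq_top _ _ h']
    rfl

lemma tauY_lt_top_iff (y : ℤ × ℤ) (inc : ℕ → ℤ × ℤ) :
    tauY y inc < ⊤ ↔ ∃ n, pathY y inc n ∈ {p : ℤ × ℤ | p.1 = p.2} := by
  by_cases h : ∃ n, pathY y inc n ∈ {p : ℤ × ℤ | p.1 = p.2}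
  · simp only [h, iff_true]
    rw [tauY, hitTime_eq_find _ _ h]
    exact_mod_cast WithTop.coe_lt_top _
  · simp only [h, iff_false, not_lt, top_le_iff]
    rw [tauY, hitTime_eq_top _ _ h]

end Stmt6Aux
namespace Stmt6Aux
open scoped ENNReal

/-- truncated exponential functional, defined recursively -/
def Hrec (z : ℝ) : ℕ → ℤ × ℤ → (ℕ → ℤ × ℤ) → ℝ≥0∞
  | 0, y, _ => if y.1 = y.2 then 1 else 0
  | n+1, y, inc => if y.1 = y.2 then 1 else
      ENNReal.ofReal z * Hrec z n (stepY y (ng (inc 1))) (fun j => inc (j + 1))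

lemma Hrec_eq_tau (z : ℝ) (hz : 0 ≤ z) :
    ∀ (n : ℕ) (y : ℤ × ℤ) (inc : ℕ → ℤ × ℤ),
      Hrec z n y inc =
        if tauY y inc ≤ (n : ℕ∞) then ENNReal.ofReal (z ^ (tauY y inc).toNat) else 0 := by
  intro n
  induction n with
  | zero =>
      intro y inc
      by_cases hy : y.1 = y.2
      · rw [tauY_eq_zero y inc hy]
        simp [Hrec, hy]
      · rw [tauY_rec y inc hy]
        have : ¬ ((tauY (stepY y (ng (inc 1))) fun j => inc (j + 1)) + 1 ≤ (0 : ℕ∞)) := by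
          simp only [nonpos_iff_eq_zero, Nat.cast_zero]
          intro hcontra
          rcases add_eq_zero.mp hcontra with ⟨_, h1⟩
          exact one_ne_zero h1
        simp [Hrec, hy, this]
  | succ n ih =>
      intro y inc
      by_cases hy : y.1 = y.2
      · rw [tauY_eq_zero y inc hy]
        simp [Hrec, hy]
      · rw [tauY_rec y inc hy]
        set t := tauY (stepY y (ng (inc 1))) fun j => inc (j + 1) with ht
        have hiff : (t + 1 ≤ ((n : ℕ) + 1 : ℕ∞)) ↔ t ≤ (n : ℕ∞) :=
          ENat.add_le_add_iff_right (by simp)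
        show (if y.1 = y.2 then 1 else ENNReal.ofReal z * Hrec z n (stepY y (ng (inc 1))) (fun j => inc (j + 1)))
          = if t + 1 ≤ ((n + 1 : ℕ) : ℕ∞) then ENNReal.ofReal (z ^ (t + 1).toNat) else 0
        rw [if_neg hy, ih]
        by_cases hle : t ≤ (n : ℕ∞)
        · have htop : t ≠ ⊤ := by
            intro hcontra
            rw [hcontra] at hle
            exact absurd (top_le_iff.mp hle) (by simp)
          have h1 : ((n + 1 : ℕ) : ℕ∞) = (n : ℕ∞) + 1 := by push_cast; ring
          rw [if_pos hle, if_pos (by rw [h1]; exact hiff.mpr hle)]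
          rw [ENat.toNat_add htop (by simp)]
          simp only [ENat.toNat_one, pow_succ]
          rw [ENNReal.ofReal_mul (pow_nonneg hz _)]
          ring
        · have h1 : ((n + 1 : ℕ) : ℕ∞) = (n : ℕ∞) + 1 := by push_cast; ring
          rw [if_neg hle, if_neg (by rw [h1]; exact fun hc => hle (hiff.mp hc))]
          simp

lemma Hrec_congr (z : ℝ) :
    ∀ (n : ℕ) (y : ℤ × ℤ) (inc1 inc2 : ℕ → ℤ × ℤ),
      (∀ k, 1 ≤ k → k ≤ n → inc1 k = inc2 k) → Hrec z n y inc1 = Hrec z n y inc2 := by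
  intro n
  induction n with
  | zero => intro y inc1 inc2 _; rfl
  | succ n ih =>
      intro y inc1 inc2 h
      show (if y.1 = y.2 then 1 else ENNReal.ofReal z * Hrec z n (stepY y (ng (inc1 1))) (fun j => inc1 (j + 1)))
        = (if y.1 = y.2 then 1 else ENNReal.ofReal z * Hrec z n (stepY y (ng (inc2 1))) (fun j => inc2 (j + 1)))
      rw [h 1 le_rfl (by omega), ih (stepY y (ng (inc2 1))) _ _ (fun k h1 h2 => h (k+1) (by omega) (by omega))]

lemma Hrec_mono_succ (z : ℝ) :
    ∀ (n : ℕ) (y : ℤ × ℤ) (inc : ℕ → ℤ × ℤ), Hrec z n y inc ≤ Hrec z (n+1) y inc := by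
  intro n
  induction n with
  | zero =>
      intro y inc
      by_cases hy : y.1 = y.2 <;> simp [Hrec, hy]
  | succ n ih =>
      intro y inc
      by_cases hy : y.1 = y.2
      · simp [Hrec, hy]
      · show (if y.1 = y.2 then 1 else ENNReal.ofReal z * Hrec z n (stepY y (ng (inc 1))) (fun j => inc (j + 1)))
          ≤ (if y.1 = y.2 then 1 else ENNReal.ofReal z * Hrec z (n+1) (stepY y (ng (inc 1))) (fun j => inc (j + 1)))
        rw [if_neg hy, if_neg hy]
        exact mul_le_mul_right (ih _ _) _

lemma Hrec_monotone (z : ℝ) (y : ℤ × ℤ) (inc : ℕ → ℤ × ℤ) :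
    Monotone (fun n => Hrec z n y inc) :=
  monotone_nat_of_le_succ (fun n => Hrec_mono_succ z n y inc)

lemma iSup_Hrec (z : ℝ) (hz : 0 ≤ z) (y : ℤ × ℤ) (inc : ℕ → ℤ × ℤ) :
    ⨆ n, Hrec z n y inc
      = if tauY y inc < ⊤ then ENNReal.ofReal (z ^ (tauY y inc).toNat) else 0 := by
  by_cases h : tauY y inc < ⊤
  · rw [if_pos h]
    obtain ⟨t, ht⟩ : ∃ t : ℕ, tauY y inc = (t : ℕ∞) := by
      lift tauY y inc to ℕ using h.ne with t
      exact ⟨t, rfl⟩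
    apply le_antisymm
    · refine iSup_le fun n => ?_
      rw [Hrec_eq_tau z hz n y inc]
      split_ifs <;> simp
    · refine le_iSup_of_le t ?_
      rw [Hrec_eq_tau z hz t y inc, if_pos (by rw [ht])]
  · rw [if_neg h]
    have htop : tauY y inc = ⊤ := by
      by_contra hc
      exact h (lt_top_iff_ne_top.mpr hc)
    refine le_antisymm (iSup_le fun n => ?_) zero_le
    rw [Hrec_eq_tau z hz n y inc, htop]
    simp

end Stmt6Aux
namespace Stmt6Aux
open scoped ENNReal
open MeasureTheory

lemma meas_set_all {γ : Type*} [Countable γ] [MeasurableSpace γ] [MeasurableSingletonClass γ]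
    (s : Set γ) : MeasurableSet s :=
  s.to_countable.measurableSet

lemma Hrec_meas {Ω : Type} [MeasurableSpace Ω] (I : ℕ → Ω → ℤ × ℤ)
    (hI : ∀ k, Measurable (I k)) (z : ℝ) (n m : ℕ) (y : ℤ × ℤ) :
    Measurable (fun ω => Hrec z n y (fun k => I (k + m) ω)) := by
  have hT : Measurable (fun ω (i : Fin n) => I (i.1 + 1 + m) ω) :=
    measurable_pi_lambda _ (fun i => hI _)
  have key : (fun ω => Hrec z n y (fun k => I (k + m) ω)) =
      (fun t : Fin n → ℤ × ℤ =>
        Hrec z n y (fun k => if h : k - 1 < n then t ⟨k - 1, h⟩ else 0)) ∘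
      (fun ω (i : Fin n) => I (i.1 + 1 + m) ω) := by
    funext ω
    simp only [Function.comp_apply]
    refine Hrec_congr z n y _ _ (fun k hk1 hkn => ?_)
    have h : k - 1 < n := by omega
    rw [dif_pos h]
    congr 1
    omega
  rw [key]
  exact (measurable_of_countable _).comp hT

lemma pathY_meas {Ω : Type} [MeasurableSpace Ω] (I : ℕ → Ω → ℤ × ℤ)
    (hI : ∀ k, Measurable (I k)) (y : ℤ × ℤ) (n : ℕ) :
    Measurable (fun ω => pathY y (fun k => I k ω) n) := by
  have hT : Measurable (fun ω (i : Fin n) => I (i.1 + 1) ω) :=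
    measurable_pi_lambda _ (fun i => hI _)
  have key : (fun ω => pathY y (fun k => I k ω) n) =
      (fun t : Fin n → ℤ × ℤ =>
        pathY y (fun k => if h : k - 1 < n then t ⟨k - 1, h⟩ else 0) n) ∘
      (fun ω (i : Fin n) => I (i.1 + 1) ω) := by
    funext ω
    simp only [Function.comp_apply]
    refine (pathY_congr y _ _ n (fun k hk1 hkn => ?_)).symm
    have h : k - 1 < n := by omega
    rw [dif_pos h]
    congr 1
    omega
  rw [key]
  exact (measurable_of_countable _).comp hT

lemma tau_lt_top_meas {Ω : Type} [MeasurableSpace Ω] (I : ℕ → Ω → ℤ × ℤ)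
    (hI : ∀ k, Measurable (I k)) (y : ℤ × ℤ) :
    MeasurableSet {ω | tauY y (fun k => I k ω) < ⊤} := by
  have key : {ω | tauY y (fun k => I k ω) < ⊤}
      = ⋃ n, (fun ω => pathY y (fun k => I k ω) n) ⁻¹' {p : ℤ × ℤ | p.1 = p.2} := by
    ext ω
    simp only [Set.mem_setOf_eq, Set.mem_iUnion, Set.mem_preimage]
    exact tauY_lt_top_iff y _
  rw [key]
  exact MeasurableSet.iUnion fun n =>
    (pathY_meas I hI y n) (meas_set_all _)

end Stmt6Aux
namespace Stmt6Aux
open scoped ENNReal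
open MeasureTheory ProbabilityTheory

lemma indep_piece {Ω : Type} [MeasurableSpace Ω] (μ : Measure Ω)
    (I : ℕ → Ω → ℤ × ℤ) (hmeas : ∀ k, Measurable (I k))
    (hind : iIndepFun I μ)
    (z : ℝ) (n m : ℕ) (y' : ℤ × ℤ) (v : ℤ × ℤ) :
    ∫⁻ ω, Set.indicator (I (1 + m) ⁻¹' {v}) (fun _ => (1 : ℝ≥0∞)) ω *
        (ENNReal.ofReal z * Hrec z n y' (fun k => I (k + (m + 1)) ω)) ∂μ
      = μ (I (1 + m) ⁻¹' {v}) *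
        (ENNReal.ofReal z * ∫⁻ ω, Hrec z n y' (fun k => I (k + (m + 1)) ω) ∂μ) := by
  classical
  set S : Finset ℕ := {1 + m} with hS
  set T : Finset ℕ := Finset.Icc (m + 2) (m + 1 + n) with hT
  have hdisj : Disjoint S T := by
    rw [Finset.disjoint_left]
    intro x hx hx'
    rw [hS, Finset.mem_singleton] at hx
    rw [hT, Finset.mem_Icc] at hx'
    omega
  have base := hind.indepFun_finset S T hdisj hmeas
  have hmem1 : (1 + m) ∈ S := by rw [hS]; exact Finset.mem_singleton_self _
  set φ1 : ((i : S) → ℤ × ℤ) → ℝ≥0∞ :=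
    fun t => Set.indicator {t' : (i : S) → ℤ × ℤ | t' ⟨1 + m, hmem1⟩ = v} (fun _ => (1 : ℝ≥0∞)) t with hφ1
  set φ2 : ((i : T) → ℤ × ℤ) → ℝ≥0∞ :=
    fun t => ENNReal.ofReal z *
      Hrec z n y' (fun k => if h : k + (m + 1) ∈ T then t ⟨k + (m + 1), h⟩ else 0) with hφ2
  have hcomp : IndepFun (φ1 ∘ fun a (i : S) => I i a) (φ2 ∘ fun a (i : T) => I i a) μ :=
    base.comp (measurable_of_countable φ1) (measurable_of_countable φ2)
  have heq1 : (φ1 ∘ fun a (i : S) => I i a)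
      = Set.indicator (I (1 + m) ⁻¹' {v}) (fun _ => (1 : ℝ≥0∞)) := by
    funext ω
    by_cases h : I (1 + m) ω = v
    · simp [hφ1, Set.indicator, h]
    · simp [hφ1, Set.indicator, h]
  have heq2 : (φ2 ∘ fun a (i : T) => I i a)
      = fun ω => ENNReal.ofReal z * Hrec z n y' (fun k => I (k + (m + 1)) ω) := by
    funext ω
    simp only [Function.comp_apply, hφ2]
    congr 1
    refine Hrec_congr z n y' _ _ (fun k hk1 hkn => ?_)
    have h : k + (m + 1) ∈ T := by rw [hT, Finset.mem_Icc]; omega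
    rw [dif_pos h]
  rw [heq1, heq2] at hcomp
  have hmul := lintegral_mul_eq_lintegral_mul_lintegral_of_indepFun''
    ((Measurable.indicator measurable_const ((hmeas (1 + m)) (meas_set_all {v}))).aemeasurable)
    ((measurable_const.fun_mul (Hrec_meas I hmeas z n (m + 1) y')).aemeasurable)
    hcomp
  rw [hmul]
  congr 1
  · rw [lintegral_indicator ((hmeas (1 + m)) (meas_set_all {v}))]
    simp
  · exact lintegral_const_mul _ (Hrec_meas I hmeas z n (m + 1) y')

end Stmt6Aux
namespace Stmt6Aux
open scoped ENNReal
open MeasureTheory ProbabilityTheory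

/-- expected truncated exponential functional -/
def Erec (z l1 m1 l2 m2 : ℝ) : ℕ → ℤ × ℤ → ℝ≥0∞
  | 0, y => if y.1 = y.2 then 1 else 0
  | n + 1, y => if y.1 = y.2 then 1 else
      ENNReal.ofReal z *
        (ENNReal.ofReal l1 * Erec z l1 m1 l2 m2 n (stepY y (-1, 0)) +
         ENNReal.ofReal m1 * Erec z l1 m1 l2 m2 n (stepY y (1, 0)) +
         ENNReal.ofReal l2 * Erec z l1 m1 l2 m2 n (stepY y (0, 1)) +
         ENNReal.ofReal m2 * Erec z l1 m1 l2 m2 n (stepY y (0, -1)))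

lemma lintegral_Hrec {Ω : Type} [MeasurableSpace Ω] (μ : Measure Ω) [IsProbabilityMeasure μ]
    (l1 m1 l2 m2 : ℝ) (hl1 : 0 ≤ l1) (hm1 : 0 ≤ m1) (hl2 : 0 ≤ l2) (hm2 : 0 ≤ m2)
    (hsum : l1 + l2 + m1 + m2 = 1)
    (I : ℕ → Ω → ℤ × ℤ) (hmeas : ∀ k, Measurable (I k))
    (hind : iIndepFun I μ)
    (hlaw : ∀ k, μ (I k ⁻¹' {((1 : ℤ), (0 : ℤ))}) = ENNReal.ofReal l1 ∧
      μ (I k ⁻¹' {((-1 : ℤ), (0 : ℤ))}) = ENNReal.ofReal m1 ∧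
      μ (I k ⁻¹' {((0 : ℤ), (1 : ℤ))}) = ENNReal.ofReal l2 ∧
      μ (I k ⁻¹' {((0 : ℤ), (-1 : ℤ))}) = ENNReal.ofReal m2)
    (z : ℝ) :
    ∀ (n m : ℕ) (y : ℤ × ℤ),
      ∫⁻ ω, Hrec z n y (fun k => I (k + m) ω) ∂μ = Erec z l1 m1 l2 m2 n y := by
  intro n
  induction n with
  | zero =>
      intro m y
      show ∫⁻ _, (if y.1 = y.2 then (1 : ℝ≥0∞) else 0) ∂μ = Erec z l1 m1 l2 m2 0 y
      rw [lintegral_const]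
      show _ = if y.1 = y.2 then (1 : ℝ≥0∞) else 0
      simp
  | succ n ih =>
      intro m y
      by_cases hy : y.1 = y.2
      · have : (fun ω => Hrec z (n+1) y (fun k => I (k + m) ω)) = fun _ => (1 : ℝ≥0∞) := by
          funext ω
          show (if y.1 = y.2 then _ else _) = _
          rw [if_pos hy]
        rw [this, lintegral_const]
        show _ = if y.1 = y.2 then (1 : ℝ≥0∞) else _
        rw [if_pos hy]
        simp
      · -- notation
        set Z := ENNReal.ofReal z with hZ
        set E : ℤ × ℤ → Set Ω := fun v => I (1 + m) ⁻¹' {v} with hE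
        set G : ℤ × ℤ → Ω → ℝ≥0∞ :=
          fun v ω => Hrec z n (stepY y (ng v)) (fun k => I (k + (m + 1)) ω) with hG
        set R : Set Ω := (E (1,0) ∪ E (-1,0) ∪ E (0,1) ∪ E (0,-1))ᶜ with hR
        have hEmeas : ∀ v, MeasurableSet (E v) := fun v => (hmeas (1 + m)) (meas_set_all {v})
        have hRmeas : MeasurableSet R :=
          (((hEmeas _).union (hEmeas _)).union (hEmeas _) |>.union (hEmeas _)).compl
        -- pointwise decomposition
        have hstep : ∀ ω, Hrec z (n+1) y (fun k => I (k + m) ω)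
            = Z * Hrec z n (stepY y (ng (I (1 + m) ω))) (fun k => I (k + (m + 1)) ω) := by
          intro ω
          show (if y.1 = y.2 then _ else Z * Hrec z n (stepY y (ng (I (1 + m) ω)))
            (fun j => I ((j + 1) + m) ω)) = _
          rw [if_neg hy]
          congr 1
          refine Hrec_congr z n _ _ _ (fun k _ _ => ?_)
          congr 1
          omega
        have hdecomp : (fun ω => Hrec z (n+1) y (fun k => I (k + m) ω)) = fun ω =>
            Set.indicator (E (1,0)) (fun _ => (1:ℝ≥0∞)) ω * (Z * G (1,0) ω) +
            Set.indicator (E (-1,0)) (fun _ => (1:ℝ≥0∞)) ω * (Z * G (-1,0) ω) +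
            Set.indicator (E (0,1)) (fun _ => (1:ℝ≥0∞)) ω * (Z * G (0,1) ω) +
            Set.indicator (E (0,-1)) (fun _ => (1:ℝ≥0∞)) ω * (Z * G (0,-1) ω) +
            Set.indicator R (fun ω' => Hrec z (n+1) y (fun k => I (k + m) ω')) ω := by
          funext ω
          have hmem : ∀ v, ω ∈ E v ↔ I (1 + m) ω = v := fun v => Set.mem_preimage.trans (by simp)
          by_cases h1 : I (1 + m) ω = (1,0)
          · have hR1 : ω ∉ R := by
              rw [hR]
              simp only [Set.mem_compl_iff, not_not, Set.mem_union]
              exact Or.inl (Or.inl (Or.inl ((hmem _).mpr h1)))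
            rw [Set.indicator_of_mem ((hmem _).mpr h1),
              Set.indicator_of_notMem (fun hc => absurd (h1.symm.trans ((hmem _).mp hc)) (by decide) : ω ∉ E (-1,0)),
              Set.indicator_of_notMem (fun hc => absurd (h1.symm.trans ((hmem _).mp hc)) (by decide) : ω ∉ E (0,1)),
              Set.indicator_of_notMem (fun hc => absurd (h1.symm.trans ((hmem _).mp hc)) (by decide) : ω ∉ E (0,-1)),
              Set.indicator_of_notMem hR1]
            rw [hstep ω, h1]
            ring
          · by_cases h2 : I (1 + m) ω = (-1,0)
            · have hR1 : ω ∉ R := by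
                rw [hR]
                simp only [Set.mem_compl_iff, not_not, Set.mem_union]
                exact Or.inl (Or.inl (Or.inr ((hmem _).mpr h2)))
              rw [Set.indicator_of_mem ((hmem _).mpr h2),
                Set.indicator_of_notMem (fun hc => h1 ((hmem _).mp hc)),
                Set.indicator_of_notMem (fun hc => absurd (h2.symm.trans ((hmem _).mp hc)) (by decide) : ω ∉ E (0,1)),
                Set.indicator_of_notMem (fun hc => absurd (h2.symm.trans ((hmem _).mp hc)) (by decide) : ω ∉ E (0,-1)),
                Set.indicator_of_notMem hR1]
              rw [hstep ω, h2]
              ring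
            · by_cases h3 : I (1 + m) ω = (0,1)
              · have hR1 : ω ∉ R := by
                  rw [hR]
                  simp only [Set.mem_compl_iff, not_not, Set.mem_union]
                  exact Or.inl (Or.inr ((hmem _).mpr h3))
                rw [Set.indicator_of_mem ((hmem _).mpr h3),
                  Set.indicator_of_notMem (fun hc => h1 ((hmem _).mp hc)),
                  Set.indicator_of_notMem (fun hc => h2 ((hmem _).mp hc)),
                  Set.indicator_of_notMem (fun hc => absurd (h3.symm.trans ((hmem _).mp hc)) (by decide) : ω ∉ E (0,-1)),
                  Set.indicator_of_notMem hR1]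
                rw [hstep ω, h3]
                ring
              · by_cases h4 : I (1 + m) ω = (0,-1)
                · have hR1 : ω ∉ R := by
                    rw [hR]
                    simp only [Set.mem_compl_iff, not_not, Set.mem_union]
                    exact Or.inr ((hmem _).mpr h4)
                  rw [Set.indicator_of_mem ((hmem _).mpr h4),
                    Set.indicator_of_notMem (fun hc => h1 ((hmem _).mp hc)),
                    Set.indicator_of_notMem (fun hc => h2 ((hmem _).mp hc)),
                    Set.indicator_of_notMem (fun hc => h3 ((hmem _).mp hc)),
                    Set.indicator_of_notMem hR1]
                  rw [hstep ω, h4]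
                  ring
                · have hR1 : ω ∈ R := by
                    rw [hR]
                    simp only [Set.mem_compl_iff, Set.mem_union]
                    rintro (((hc | hc) | hc) | hc)
                    exacts [h1 ((hmem _).mp hc), h2 ((hmem _).mp hc),
                      h3 ((hmem _).mp hc), h4 ((hmem _).mp hc)]
                  rw [Set.indicator_of_notMem (fun hc => h1 ((hmem _).mp hc)),
                    Set.indicator_of_notMem (fun hc => h2 ((hmem _).mp hc)),
                    Set.indicator_of_notMem (fun hc => h3 ((hmem _).mp hc)),
                    Set.indicator_of_notMem (fun hc => h4 ((hmem _).mp hc)),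
                    Set.indicator_of_mem hR1]
                  ring
        -- measurability of the four main terms
        have hterm : ∀ v : ℤ × ℤ, Measurable (fun ω =>
            Set.indicator (E v) (fun _ => (1:ℝ≥0∞)) ω * (Z * G v ω)) := by
          intro v
          exact (Measurable.indicator measurable_const (hEmeas v)).mul
            (measurable_const.mul (Hrec_meas I hmeas z n (m+1) (stepY y (ng v))))
        -- split the integral
        rw [hdecomp]
        rw [lintegral_add_left (((((hterm _).fun_add (hterm _)).fun_add (hterm _))).fun_add (hterm _)),
          lintegral_add_left (((hterm _).fun_add (hterm _)).fun_add (hterm _)),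
          lintegral_add_left ((hterm _).fun_add (hterm _)),
          lintegral_add_left (hterm _)]
        -- the remainder term vanishes
        have hmuU : μ (E (1,0) ∪ E (-1,0) ∪ E (0,1) ∪ E (0,-1)) = 1 := by
          have d12 : Disjoint (E (1,0)) (E (-1,0)) := by
            rw [Set.disjoint_left]; intro ω h h'
            rw [hE, Set.mem_preimage, Set.mem_singleton_iff] at h h'
            rw [h] at h'; exact absurd h' (by decide)
          have d3 : Disjoint (E (1,0) ∪ E (-1,0)) (E (0,1)) := by
            rw [Set.disjoint_left]; rintro ω (h | h) h' <;>
              (rw [hE, Set.mem_preimage, Set.mem_singleton_iff] at h h'; rw [h] at h';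
                exact absurd h' (by decide))
          have d4 : Disjoint (E (1,0) ∪ E (-1,0) ∪ E (0,1)) (E (0,-1)) := by
            rw [Set.disjoint_left]; rintro ω ((h | h) | h) h' <;>
              (rw [hE, Set.mem_preimage, Set.mem_singleton_iff] at h h'; rw [h] at h';
                exact absurd h' (by decide))
          rw [measure_union d4 (hEmeas _), measure_union d3 (hEmeas _),
            measure_union d12 (hEmeas _)]
          obtain ⟨q1, q2, q3, q4⟩ := hlaw (1 + m)
          rw [hE]
          simp only []
          rw [q1, q2, q3, q4]
          rw [← ENNReal.ofReal_add hl1 hm1, ← ENNReal.ofReal_add (by linarith) hl2,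
            ← ENNReal.ofReal_add (by linarith) hm2]
          rw [show l1 + m1 + l2 + m2 = 1 by linarith]
          simp
        have hmuR : μ R = 0 := by
          rw [hR, measure_compl ((((hEmeas _).union (hEmeas _)).union (hEmeas _)).union (hEmeas _))
            (measure_ne_top μ _), hmuU, measure_univ, tsub_self]
        have hrem : ∫⁻ ω, Set.indicator R (fun ω' => Hrec z (n+1) y (fun k => I (k + m) ω')) ω ∂μ = 0 := by
          refine le_antisymm ?_ zero_le
          calc ∫⁻ ω, Set.indicator R (fun ω' => Hrec z (n+1) y (fun k => I (k + m) ω')) ω ∂μ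
              ≤ ∫⁻ ω, Set.indicator R (fun _ => (⊤ : ℝ≥0∞)) ω ∂μ := by
                refine lintegral_mono (fun ω => ?_)
                exact Set.indicator_le_indicator' (fun _ => le_top)
            _ = ⊤ * μ R := lintegral_indicator_const hRmeas ⊤
            _ = 0 := by rw [hmuR, mul_zero]
        rw [hrem]
        -- evaluate the four main terms
        have hpiece : ∀ v : ℤ × ℤ,
            ∫⁻ ω, Set.indicator (E v) (fun _ => (1:ℝ≥0∞)) ω * (Z * G v ω) ∂μ
              = μ (E v) * (Z * Erec z l1 m1 l2 m2 n (stepY y (ng v))) := by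
          intro v
          rw [hE, hZ, hG]
          rw [indep_piece μ I hmeas hind z n m (stepY y (ng v)) v]
          rw [ih (m + 1) (stepY y (ng v))]
        rw [hpiece (1,0), hpiece (-1,0), hpiece (0,1), hpiece (0,-1)]
        obtain ⟨q1, q2, q3, q4⟩ := hlaw (1 + m)
        have hng1 : stepY y (ng (1,0)) = stepY y (-1, 0) := by norm_num [ng]
        have hng2 : stepY y (ng (-1,0)) = stepY y (1, 0) := by norm_num [ng]
        have hng3 : stepY y (ng (0,1)) = stepY y (0, 1) := by norm_num [ng]
        have hng4 : stepY y (ng (0,-1)) = stepY y (0, -1) := by norm_num [ng]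
        rw [hng1, hng2, hng3, hng4, hE]
        simp only []
        rw [q1, q2, q3, q4]
        show _ = Erec z l1 m1 l2 m2 (n+1) y
        rw [show Erec z l1 m1 l2 m2 (n+1) y = if y.1 = y.2 then 1 else
          ENNReal.ofReal z *
            (ENNReal.ofReal l1 * Erec z l1 m1 l2 m2 n (stepY y (-1, 0)) +
             ENNReal.ofReal m1 * Erec z l1 m1 l2 m2 n (stepY y (1, 0)) +
             ENNReal.ofReal l2 * Erec z l1 m1 l2 m2 n (stepY y (0, 1)) +
             ENNReal.ofReal m2 * Erec z l1 m1 l2 m2 n (stepY y (0, -1))) from rfl,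
          if_neg hy, hZ]
        ring

end Stmt6Aux
namespace Stmt6Aux
open scoped ENNReal

lemma Erec_le (z a K l1 m1 l2 m2 : ℝ)
    (hz : 0 ≤ z) (ha0 : 0 < a) (hK : 0 ≤ K)
    (hl1 : 0 ≤ l1) (hm1 : 0 ≤ m1) (hl2 : 0 ≤ l2) (hm2 : 0 ≤ m2)
    (hPhi : z * ((l1 + l2) * a⁻¹ + (m1 + m2) * a) ≤ 1)
    (hphi : z * (l1 * a⁻¹ + m1 * a + l2 + m2) ≤ 1)
    (hB : z * ((l1 + l2) * a⁻¹ + m1 * a + m2)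
      ≤ 1 + K * (1 - z * (l1 * a⁻¹ + m1 * a + l2 + m2))) :
    ∀ (n : ℕ) (y : ℤ × ℤ), 0 ≤ y.2 → y.2 ≤ y.1 →
      Erec z l1 m1 l2 m2 n y ≤ ENNReal.ofReal (a ^ (y.1 - y.2) + K * a ^ y.1) := by
  have hadd : ∀ (y v : ℤ × ℤ), y + v = (y.1 + v.1, y.2 + v.2) := fun y v => rfl
  have hg : ∀ e e' : ℤ, 0 ≤ a ^ e + K * a ^ e' := fun e e' =>
    add_nonneg (zpow_pos ha0 e).le (mul_nonneg hK (zpow_pos ha0 e').le)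
  have target_le : ∀ y : ℤ × ℤ, y.1 = y.2 →
      (1 : ℝ≥0∞) ≤ ENNReal.ofReal (a ^ (y.1 - y.2) + K * a ^ y.1) := by
    intro y hy
    rw [show y.1 - y.2 = 0 by omega, zpow_zero, ENNReal.one_le_ofReal]
    nlinarith [zpow_pos ha0 y.1]
  intro n
  induction n with
  | zero =>
      intro y h2 h21
      show (if y.1 = y.2 then (1:ℝ≥0∞) else 0) ≤ _
      split_ifs with hy
      · exact target_le y hy
      · exact zero_le
  | succ n ih =>
      intro y h2 h21
      show (if y.1 = y.2 then (1:ℝ≥0∞) else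
        ENNReal.ofReal z *
          (ENNReal.ofReal l1 * Erec z l1 m1 l2 m2 n (stepY y (-1, 0)) +
           ENNReal.ofReal m1 * Erec z l1 m1 l2 m2 n (stepY y (1, 0)) +
           ENNReal.ofReal l2 * Erec z l1 m1 l2 m2 n (stepY y (0, 1)) +
           ENNReal.ofReal m2 * Erec z l1 m1 l2 m2 n (stepY y (0, -1)))) ≤ _
      split_ifs with hy
      · exact target_le y hy
      · have hlt : y.2 < y.1 := lt_of_le_of_ne h21 (fun hc => hy hc.symm)
        have hs1 : stepY y ((-1 : ℤ), (0 : ℤ)) = (y.1 - 1, y.2) := by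
          rw [stepY, hadd, if_pos (by simpa using h2)]
          exact Prod.ext (by omega) (by omega)
        have hs2 : stepY y ((1 : ℤ), (0 : ℤ)) = (y.1 + 1, y.2) := by
          rw [stepY, hadd, if_pos (by simpa using h2)]
          exact Prod.ext (by omega) (by omega)
        have hs3 : stepY y ((0 : ℤ), (1 : ℤ)) = (y.1, y.2 + 1) := by
          rw [stepY, hadd, if_pos (by simp; omega)]
          exact Prod.ext (by omega) (by omega)
        -- exponent rewrites
        have e1 : a ^ (y.1 - 1 - y.2) = a ^ (y.1 - y.2) * a⁻¹ := by
          rw [show y.1 - 1 - y.2 = y.1 - y.2 - 1 by ring, zpow_sub_one₀ ha0.ne']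
        have e2 : a ^ (y.1 + 1 - y.2) = a ^ (y.1 - y.2) * a := by
          rw [show y.1 + 1 - y.2 = y.1 - y.2 + 1 by ring, zpow_add_one₀ ha0.ne']
        have e3 : a ^ (y.1 - (y.2 + 1)) = a ^ (y.1 - y.2) * a⁻¹ := by
          rw [show y.1 - (y.2 + 1) = y.1 - y.2 - 1 by ring, zpow_sub_one₀ ha0.ne']
        have e4 : a ^ (y.1 - (y.2 - 1)) = a ^ (y.1 - y.2) * a := by
          rw [show y.1 - (y.2 - 1) = y.1 - y.2 + 1 by ring, zpow_add_one₀ ha0.ne']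
        have f1 : a ^ (y.1 - 1) = a ^ y.1 * a⁻¹ := zpow_sub_one₀ ha0.ne' y.1
        have f2 : a ^ (y.1 + 1) = a ^ y.1 * a := zpow_add_one₀ ha0.ne' y.1
        have hT : (0:ℝ) < a ^ (y.1 - y.2) := zpow_pos ha0 _
        have hS : (0:ℝ) < a ^ y.1 := zpow_pos ha0 _
        by_cases hcase : 1 ≤ y.2
        · -- interior case
          have hs4 : stepY y ((0 : ℤ), (-1 : ℤ)) = (y.1, y.2 - 1) := by
            rw [stepY, hadd, if_pos (by simp; omega)]
            exact Prod.ext (by omega) (by omega)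
          have b1 : Erec z l1 m1 l2 m2 n (y.1 - 1, y.2)
              ≤ ENNReal.ofReal (a ^ (y.1 - 1 - y.2) + K * a ^ (y.1 - 1)) :=
            ih (y.1 - 1, y.2) h2 (by omega)
          have b2 : Erec z l1 m1 l2 m2 n (y.1 + 1, y.2)
              ≤ ENNReal.ofReal (a ^ (y.1 + 1 - y.2) + K * a ^ (y.1 + 1)) :=
            ih (y.1 + 1, y.2) h2 (by omega)
          have b3 : Erec z l1 m1 l2 m2 n (y.1, y.2 + 1)
              ≤ ENNReal.ofReal (a ^ (y.1 - (y.2 + 1)) + K * a ^ y.1) :=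
            ih (y.1, y.2 + 1) (by omega) (by omega)
          have b4 : Erec z l1 m1 l2 m2 n (y.1, y.2 - 1)
              ≤ ENNReal.ofReal (a ^ (y.1 - (y.2 - 1)) + K * a ^ y.1) :=
            ih (y.1, y.2 - 1) (by omega) (by omega)
          rw [hs1, hs2, hs3, hs4]
          refine le_trans (mul_le_mul_right (add_le_add (add_le_add (add_le_add
            (mul_le_mul_right b1 _) (mul_le_mul_right b2 _))
            (mul_le_mul_right b3 _)) (mul_le_mul_right b4 _)) _) ?_
          rw [← ENNReal.ofReal_mul hl1, ← ENNReal.ofReal_mul hm1,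
            ← ENNReal.ofReal_mul hl2, ← ENNReal.ofReal_mul hm2,
            ← ENNReal.ofReal_add (mul_nonneg hl1 (hg _ _)) (mul_nonneg hm1 (hg _ _)),
            ← ENNReal.ofReal_add (add_nonneg (mul_nonneg hl1 (hg _ _)) (mul_nonneg hm1 (hg _ _)))
              (mul_nonneg hl2 (hg _ _)),
            ← ENNReal.ofReal_add (add_nonneg (add_nonneg (mul_nonneg hl1 (hg _ _))
              (mul_nonneg hm1 (hg _ _))) (mul_nonneg hl2 (hg _ _))) (mul_nonneg hm2 (hg _ _)),
            ← ENNReal.ofReal_mul hz]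
          apply ENNReal.ofReal_le_ofReal
          rw [e1, e2, e3, e4, f1, f2]
          set T := a ^ (y.1 - y.2) with hTdef
          set S := a ^ y.1 with hSdef
          have c1 : z * ((l1 + l2) * a⁻¹ + (m1 + m2) * a) * T ≤ 1 * T :=
            mul_le_mul_of_nonneg_right hPhi hT.le
          have c2 : z * (l1 * a⁻¹ + m1 * a + l2 + m2) * (K * S) ≤ 1 * (K * S) :=
            mul_le_mul_of_nonneg_right hphi (mul_nonneg hK hS.le)
          have hring : z * (l1 * (T * a⁻¹ + K * (S * a⁻¹)) + m1 * (T * a + K * (S * a)) +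
              l2 * (T * a⁻¹ + K * S) + m2 * (T * a + K * S))
              = z * ((l1 + l2) * a⁻¹ + (m1 + m2) * a) * T
                + z * (l1 * a⁻¹ + m1 * a + l2 + m2) * (K * S) := by ring
          rw [hring]
          linarith
        · -- boundary case : y.2 = 0
          have hy2 : y.2 = 0 := by omega
          have hs4 : stepY y ((0 : ℤ), (-1 : ℤ)) = y := by
            rw [stepY, hadd, if_neg (by simp; omega)]
          have b1 : Erec z l1 m1 l2 m2 n (y.1 - 1, y.2)
              ≤ ENNReal.ofReal (a ^ (y.1 - 1 - y.2) + K * a ^ (y.1 - 1)) :=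
            ih (y.1 - 1, y.2) h2 (by omega)
          have b2 : Erec z l1 m1 l2 m2 n (y.1 + 1, y.2)
              ≤ ENNReal.ofReal (a ^ (y.1 + 1 - y.2) + K * a ^ (y.1 + 1)) :=
            ih (y.1 + 1, y.2) h2 (by omega)
          have b3 : Erec z l1 m1 l2 m2 n (y.1, y.2 + 1)
              ≤ ENNReal.ofReal (a ^ (y.1 - (y.2 + 1)) + K * a ^ y.1) :=
            ih (y.1, y.2 + 1) (by omega) (by omega)
          have b4 : Erec z l1 m1 l2 m2 n y
              ≤ ENNReal.ofReal (a ^ (y.1 - y.2) + K * a ^ y.1) :=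
            ih y h2 h21
          rw [hs1, hs2, hs3, hs4]
          refine le_trans (mul_le_mul_right (add_le_add (add_le_add (add_le_add
            (mul_le_mul_right b1 _) (mul_le_mul_right b2 _))
            (mul_le_mul_right b3 _)) (mul_le_mul_right b4 _)) _) ?_
          rw [← ENNReal.ofReal_mul hl1, ← ENNReal.ofReal_mul hm1,
            ← ENNReal.ofReal_mul hl2, ← ENNReal.ofReal_mul hm2,
            ← ENNReal.ofReal_add (mul_nonneg hl1 (hg _ _)) (mul_nonneg hm1 (hg _ _)),
            ← ENNReal.ofReal_add (add_nonneg (mul_nonneg hl1 (hg _ _)) (mul_nonneg hm1 (hg _ _)))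
              (mul_nonneg hl2 (hg _ _)),
            ← ENNReal.ofReal_add (add_nonneg (add_nonneg (mul_nonneg hl1 (hg _ _))
              (mul_nonneg hm1 (hg _ _))) (mul_nonneg hl2 (hg _ _))) (mul_nonneg hm2 (hg _ _)),
            ← ENNReal.ofReal_mul hz]
          apply ENNReal.ofReal_le_ofReal
          rw [e1, e2, e3, f1, f2]
          have hTS : a ^ (y.1 - y.2) = a ^ y.1 := by rw [hy2, sub_zero]
          rw [hTS]
          set S := a ^ y.1 with hSdef
          have c : z * ((l1 + l2) * a⁻¹ + m1 * a + m2) * S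
              ≤ (1 + K * (1 - z * (l1 * a⁻¹ + m1 * a + l2 + m2))) * S :=
            mul_le_mul_of_nonneg_right hB hS.le
          have hring : z * (l1 * (S * a⁻¹ + K * (S * a⁻¹)) + m1 * (S * a + K * (S * a)) +
              l2 * (S * a⁻¹ + K * S) + m2 * (S + K * S))
              = z * ((l1 + l2) * a⁻¹ + m1 * a + m2) * S
                + z * (l1 * a⁻¹ + m1 * a + l2 + m2) * (K * S) := by ring
          rw [hring]
          nlinarith [c]

end Stmt6Aux
set_option maxHeartbeats 1000000 in
open Stmt6Aux in
theorem stmt6 {Ω : Type} [MeasurableSpace Ω] (μ : Measure Ω) [IsProbabilityMeasure μ]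
    (l1 m1 l2 m2 : ℝ)
    (hl1 : 0 < l1) (hm1 : 0 < m1) (hl2 : 0 < l2) (hm2 : 0 < m2)
    (hsum : l1 + l2 + m1 + m2 = 1)
    (hρ1 : l1 / m1 < 1) (hρ2 : l2 / m2 < 1)
    (hord1 : l2 / m2 ≤ (l1 + l2) / (m1 + m2))
    (hord2 : (l1 + l2) / (m1 + m2) ≤ l1 / m1)
    (hneq : l1 / m1 ≠ l2 / m2)
    (hr2 : ((l1 + l2) / (m1 + m2)) ^ 2 < l2 / m2)
    (I : ℕ → Ω → ℤ × ℤ) (hI : IncrementsLaw l1 m1 l2 m2 μ I) :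
    ∃ z0 : ℝ, 1 < z0 ∧ ∃ C1 : ℝ, 0 < C1 ∧
      ∀ y : ℤ × ℤ, 0 ≤ y.2 → y.2 ≤ y.1 →
        ∫⁻ ω in {ω | tauY y (fun k => I k ω) < ⊤},
            ENNReal.ofReal (z0 ^ (tauY y (fun k => I k ω)).toNat) ∂μ <
          ENNReal.ofReal C1 := by
  obtain ⟨hmeas, hind, hlaw⟩ := hI
  -- the constants
  have hρ1pos : 0 < l1 / m1 := div_pos hl1 hm1
  set a : ℝ := (l1 / m1 + 1) / 2 with ha_def
  have ha0 : 0 < a := by rw [ha_def]; linarith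
  have ha1 : a < 1 := by rw [ha_def]; linarith
  have haρ : l1 / m1 < a := by rw [ha_def]; linarith
  have hal1 : l1 < a * m1 := (div_lt_iff₀ hm1).mp haρ
  have hq : 0 < m1 + m2 := by linarith
  have har : (l1 + l2) / (m1 + m2) < a := lt_of_le_of_lt hord2 haρ
  have hpltqa : l1 + l2 < a * (m1 + m2) := (div_lt_iff₀ hq).mp har
  have hinv : a⁻¹ * a = 1 := inv_mul_cancel₀ ha0.ne'
  set Phi : ℝ := (l1 + l2) * a⁻¹ + (m1 + m2) * a with hPhi_def
  set phic : ℝ := l1 * a⁻¹ + m1 * a + l2 + m2 with hphic_def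
  have hPhi1 : Phi < 1 := by
    have hPa : Phi * a = (l1 + l2) + (m1 + m2) * (a * a) := by
      rw [hPhi_def]
      calc ((l1 + l2) * a⁻¹ + (m1 + m2) * a) * a
          = (l1 + l2) * (a⁻¹ * a) + (m1 + m2) * (a * a) := by ring
        _ = (l1 + l2) + (m1 + m2) * (a * a) := by rw [hinv, mul_one]
    have key : 0 < (1 - a) * ((m1 + m2) * a - (l1 + l2)) :=
      mul_pos (by linarith) (by linarith)
    have hsa : (l1 + l2 + m1 + m2) * a = a := by rw [hsum, one_mul]
    have : Phi * a < 1 * a := by rw [hPa, one_mul]; nlinarith [key, hsa]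
    exact lt_of_mul_lt_mul_right (by linarith) ha0.le
  have hphic1 : phic < 1 := by
    have hpa : phic * a = l1 + m1 * (a * a) + (l2 + m2) * a := by
      rw [hphic_def]
      calc (l1 * a⁻¹ + m1 * a + l2 + m2) * a
          = l1 * (a⁻¹ * a) + m1 * (a * a) + (l2 + m2) * a := by ring
        _ = l1 + m1 * (a * a) + (l2 + m2) * a := by rw [hinv, mul_one]
    have key : 0 < (1 - a) * (m1 * a - l1) := mul_pos (by linarith) (by linarith)
    have hsa : (l1 + l2 + m1 + m2) * a = a := by rw [hsum, one_mul]
    have : phic * a < 1 * a := by rw [hpa, one_mul]; nlinarith [key, hsa]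
    exact lt_of_mul_lt_mul_right (by linarith) ha0.le
  have hPhipos : 0 < Phi := by
    rw [hPhi_def]
    have := inv_pos.mpr ha0
    have h1 : 0 < (l1 + l2) * a⁻¹ := mul_pos (by linarith) this
    linarith [mul_pos hq ha0]
  set M : ℝ := max Phi phic with hM_def
  have hM1 : M < 1 := max_lt hPhi1 hphic1
  have hM0 : 0 < M := lt_of_lt_of_le hPhipos (le_max_left _ _)
  set zc : ℝ := (M + 1) / (2 * M) with hzc_def
  have hz1 : 1 < zc := by
    rw [hzc_def, lt_div_iff₀ (by linarith : (0:ℝ) < 2 * M)]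
    linarith
  have hz0 : 0 ≤ zc := by linarith
  have hzM : zc * M = (M + 1) / 2 := by
    rw [hzc_def]; field_simp
  have hzPhi : zc * Phi ≤ (M + 1) / 2 := by
    calc zc * Phi ≤ zc * M := mul_le_mul_of_nonneg_left (le_max_left _ _) hz0
      _ = (M + 1) / 2 := hzM
  have hzphic : zc * phic ≤ (M + 1) / 2 := by
    calc zc * phic ≤ zc * M := mul_le_mul_of_nonneg_left (le_max_right _ _) hz0
      _ = (M + 1) / 2 := hzM
  have hzPhi1 : zc * Phi ≤ 1 := le_trans hzPhi (by linarith)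
  have hzphic1 : zc * phic ≤ 1 := le_trans hzphic (by linarith)
  set B1 : ℝ := (l1 + l2) * a⁻¹ + m1 * a + m2 with hB1_def
  have hB1pos : 0 < B1 := by
    rw [hB1_def]
    have h1 : 0 < (l1 + l2) * a⁻¹ := mul_pos (by linarith) (inv_pos.mpr ha0)
    linarith [mul_pos hm1 ha0]
  set δ : ℝ := (1 - M) / 2 with hδ_def
  have hδ0 : 0 < δ := by rw [hδ_def]; linarith
  set K : ℝ := zc * B1 / δ with hK_def
  have hK : 0 ≤ K := by
    rw [hK_def]
    exact div_nonneg (mul_nonneg hz0 hB1pos.le) hδ0.le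
  have hKδ : K * δ = zc * B1 := by rw [hK_def]; field_simp
  have hBcond : zc * B1 ≤ 1 + K * (1 - zc * phic) := by
    have h1 : δ ≤ 1 - zc * phic := by rw [hδ_def]; linarith
    have h2 : K * δ ≤ K * (1 - zc * phic) := mul_le_mul_of_nonneg_left h1 hK
    rw [hKδ] at h2
    linarith
  -- conclusion
  refine ⟨zc, hz1, K + 2, by linarith, ?_⟩
  intro y hy2 hy21
  have hSmeas := tau_lt_top_meas I hmeas y
  have hint : ∫⁻ ω in {ω | tauY y (fun k => I k ω) < ⊤},
      ENNReal.ofReal (zc ^ (tauY y (fun k => I k ω)).toNat) ∂μ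
      = ⨆ n, Erec zc l1 m1 l2 m2 n y := by
    rw [← lintegral_indicator hSmeas]
    have hptw : ∀ ω, Set.indicator {ω | tauY y (fun k => I k ω) < ⊤}
        (fun ω => ENNReal.ofReal (zc ^ (tauY y (fun k => I k ω)).toNat)) ω
        = ⨆ n, Hrec zc n y (fun k => I k ω) := by
      intro ω
      rw [iSup_Hrec zc hz0 y]
      by_cases h : tauY y (fun k => I k ω) < ⊤
      · rw [Set.indicator_of_mem (show ω ∈ {ω | tauY y (fun k => I k ω) < ⊤} from h),
          if_pos h]
      · rw [Set.indicator_of_notMem (show ω ∉ {ω | tauY y (fun k => I k ω) < ⊤} from h),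
          if_neg h]
    rw [lintegral_congr hptw]
    rw [lintegral_iSup
      (fun n => (show Measurable fun ω => Hrec zc n y (fun k => I k ω) from
        Hrec_meas I hmeas zc n 0 y))
      (fun n n' hnn' ω => Hrec_monotone zc y _ hnn')]
    exact iSup_congr (fun n =>
      show ∫⁻ ω, Hrec zc n y (fun k => I k ω) ∂μ = Erec zc l1 m1 l2 m2 n y from
        lintegral_Hrec μ l1 m1 l2 m2 hl1.le hm1.le hl2.le hm2.le hsum I hmeas hind hlaw zc n 0 y)
  rw [hint]
  have hbound : (⨆ n, Erec zc l1 m1 l2 m2 n y) ≤ ENNReal.ofReal (1 + K) := by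
    refine iSup_le (fun n => le_trans
      (Erec_le zc a K l1 m1 l2 m2 hz0 ha0 hK hl1.le hm1.le hl2.le hm2.le
        hzPhi1 hzphic1 hBcond n y hy2 hy21) ?_)
    apply ENNReal.ofReal_le_ofReal
    have h1 : a ^ (y.1 - y.2) ≤ 1 := zpow_le_one₀ ha0 ha1.le (by omega)
    have h2 : a ^ y.1 ≤ 1 := zpow_le_one₀ ha0 ha1.le (by omega)
    have h3 : K * a ^ y.1 ≤ K * 1 := mul_le_mul_of_nonneg_left h2 hK
    linarith
  refine lt_of_le_of_lt hbound ?_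
  rw [ENNReal.ofReal_lt_ofReal_iff (by linarith)]
  linarith
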